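/- arXiv:2205.15310 — 4 statements merged into one kernel-verified Lean document; each statement's English description precedes it below -/
import Mathlib

section
/- Let β > 1, C ≥ 1 and λ ≥ 1 be real numbers, and let (E_k)_{k≥0} be a sequence of nonnegative real numbers satisfying the recursive inequality E_{k+1} ≤ C·λ^{k+1}·E_k^β for every k ≥ 0. Then, setting M = C^{1/(β-1)}·λ^{β/(β-1)²}, one has E_k ≤ (M·E_0)^{β^k} for every k ≥ 0. -/
open Real

lemma deGiorgi_aux (β C l : ℝ) (hβ : 1 < β) (hC : 1 ≤ C) (hl : 1 ≤ l)
    (E : ℕ → ℝ) (hE : ∀ k, 0 ≤ E k)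
    (hrec : ∀ k, E (k + 1) ≤ C * l ^ (k + 1) * E k ^ β) :
    ∀ k, E k ≤ C ^ ((β ^ k - 1) / (β - 1)) *
      l ^ ((β ^ (k + 1) - (β - 1) * k - β) / (β - 1) ^ 2) * E 0 ^ (β ^ k) := by
  have hb : (0:ℝ) < β - 1 := by linarith
  have hC0 : (0:ℝ) < C := by linarith
  have hl0 : (0:ℝ) < l := by linarith
  intro k
  induction k with
  | zero => simp
  | succ k ih =>
    have hE0 : (0:ℝ) ≤ E 0 := hE 0
    set a := (β ^ k - 1) / (β - 1) with ha
    set b := (β ^ (k + 1) - (β - 1) * k - β) / (β - 1) ^ 2 with hbdef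
    have h1 : E (k+1) ≤ C * l ^ (k+1) * (C ^ a * l ^ b * E 0 ^ (β ^ k)) ^ β := by
      refine (hrec k).trans ?_
      have := Real.rpow_le_rpow (hE k) ih (by positivity : (0:ℝ) ≤ β)
      exact mul_le_mul_of_nonneg_left this (by positivity)
    refine h1.trans_eq ?_
    rw [Real.mul_rpow (by positivity) (by positivity),
        Real.mul_rpow (by positivity) (by positivity),
        ← Real.rpow_natCast l (k+1),
        ← Real.rpow_mul hC0.le, ← Real.rpow_mul hl0.le, ← Real.rpow_mul hE0]
    have e1 : C * l ^ ((k+1 : ℕ) : ℝ) * (C ^ (a * β) * l ^ (b * β) * E 0 ^ (β ^ k * β))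
        = (C * C ^ (a * β)) * (l ^ ((k+1 : ℕ) : ℝ) * l ^ (b * β)) * E 0 ^ (β ^ k * β) := by
      ring
    rw [e1]
    have e2 : C * C ^ (a * β) = C ^ (1 + a * β) := by
      rw [Real.rpow_add hC0, Real.rpow_one]
    have e3 : l ^ ((k+1 : ℕ) : ℝ) * l ^ (b * β) = l ^ (((k+1 : ℕ) : ℝ) + b * β) := by
      rw [Real.rpow_add hl0]
    rw [e2, e3]
    have hx1 : 1 + a * β = (β ^ (k+1) - 1) / (β - 1) := by
      rw [ha]; field_simp; ring
    have hx2 : ((k+1 : ℕ) : ℝ) + b * β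
        = (β ^ (k + 1 + 1) - (β - 1) * (k+1 : ℕ) - β) / (β - 1) ^ 2 := by
      rw [hbdef]; push_cast; field_simp; ring
    have hx3 : β ^ k * β = β ^ (k + 1) := (pow_succ β k).symm
    rw [hx1, hx2, hx3]

/-- Let `β > 1`, `C ≥ 1`, `λ ≥ 1` be reals and `(E_k)` a nonnegative sequence with
`E_{k+1} ≤ C·λ^{k+1}·E_k^β`. Then, with `M = C^{1/(β-1)}·λ^{β/(β-1)²}`, one has
`E_k ≤ (M·E_0)^{β^k}` for every `k`. -/
theorem deGiorgi_iteration_bound (β C l : ℝ) (hβ : 1 < β) (hC : 1 ≤ C) (hl : 1 ≤ l)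
    (E : ℕ → ℝ) (hE : ∀ k, 0 ≤ E k)
    (hrec : ∀ k, E (k + 1) ≤ C * l ^ (k + 1) * E k ^ β) :
    ∀ k, E k ≤ (C ^ (1 / (β - 1)) * l ^ (β / (β - 1) ^ 2) * E 0) ^ (β ^ k) := by
  have hb : (0:ℝ) < β - 1 := by linarith
  have hC0 : (0:ℝ) < C := by linarith
  have hl0 : (0:ℝ) < l := by linarith
  intro k
  have hE0 : (0:ℝ) ≤ E 0 := hE 0
  have hβk : (0:ℝ) < β ^ k := by positivity
  have hrhs : (C ^ (1 / (β - 1)) * l ^ (β / (β - 1) ^ 2) * E 0) ^ (β ^ k)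
      = C ^ (1 / (β - 1) * β ^ k) * l ^ (β / (β - 1) ^ 2 * β ^ k) * E 0 ^ (β ^ k) := by
    rw [Real.mul_rpow (by positivity) hE0, Real.mul_rpow (by positivity) (by positivity),
        ← Real.rpow_mul hC0.le, ← Real.rpow_mul hl0.le]
  rw [hrhs]
  refine (deGiorgi_aux β C l hβ hC hl E hE hrec k).trans ?_
  have h1 : C ^ ((β ^ k - 1) / (β - 1)) ≤ C ^ (1 / (β - 1) * β ^ k) := by
    apply Real.rpow_le_rpow_of_exponent_le hC
    rw [show 1 / (β - 1) * β ^ k = β ^ k / (β - 1) by ring]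
    exact (div_le_div_iff_of_pos_right hb).mpr (by linarith)
  have h2 : l ^ ((β ^ (k + 1) - (β - 1) * k - β) / (β - 1) ^ 2)
      ≤ l ^ (β / (β - 1) ^ 2 * β ^ k) := by
    apply Real.rpow_le_rpow_of_exponent_le hl
    have hk : (0:ℝ) ≤ (β - 1) * (k : ℝ) := by positivity
    rw [show β / (β - 1) ^ 2 * β ^ k = (β ^ (k + 1)) / (β - 1) ^ 2 by ring]
    exact (div_le_div_iff_of_pos_right (by positivity)).mpr (by linarith)
  exact mul_le_mul (mul_le_mul h1 h2 (by positivity) (by positivity)) le_rfl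
    (by positivity) (by positivity)
end

section
/- Let (X, μ) be a measure space, K > 0, k a natural number, and for each natural number j set ℓ_j = K·(1 − 2^{−j}). Let f : X → ℝ be measurable and suppose the function x ↦ (max(0, f(x) − ℓ_k))² is integrable with respect to μ. Then x ↦ max(0, f(x) − ℓ_{k+1}) is integrable and ∫_X max(0, f(x) − ℓ_{k+1}) dμ(x) ≤ (2^{k+1}/K)·∫_X (max(0, f(x) − ℓ_k))² dμ(x). -/
open MeasureTheory

/-- Let `(X, μ)` be a measure space, `K > 0`, `ℓ_j = K(1 - 2^{-j})`, and `f : X → ℝ`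
measurable with `x ↦ (max(0, f x - ℓ_k))²` integrable. Then `x ↦ max(0, f x - ℓ_{k+1})`
is integrable and `∫ max(0, f - ℓ_{k+1}) dμ ≤ (2^{k+1}/K) ∫ (max(0, f - ℓ_k))² dμ`. -/
theorem truncation_integral_bound {X : Type*} [MeasurableSpace X] (μ : Measure X)
    (K : ℝ) (hK : 0 < K) (k : ℕ) (f : X → ℝ) (hf : Measurable f)
    (hint : Integrable (fun x => (max 0 (f x - K * (1 - 1 / 2 ^ k))) ^ 2) μ) :
    Integrable (fun x => max 0 (f x - K * (1 - 1 / 2 ^ (k + 1)))) μ ∧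
      ∫ x, max 0 (f x - K * (1 - 1 / 2 ^ (k + 1))) ∂μ ≤
        2 ^ (k + 1) / K * ∫ x, (max 0 (f x - K * (1 - 1 / 2 ^ k))) ^ 2 ∂μ := by
  set c : ℝ := 2 ^ (k + 1) / K with hc
  have hcpos : 0 < c := by positivity
  have key : ∀ x, max 0 (f x - K * (1 - 1 / 2 ^ (k + 1))) ≤
      c * (max 0 (f x - K * (1 - 1 / 2 ^ k))) ^ 2 := by
    intro x
    set a : ℝ := f x - K * (1 - 1 / 2 ^ k) with ha
    set d : ℝ := K / 2 ^ (k + 1) with hd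
    have hdpos : 0 < d := by positivity
    have hb : f x - K * (1 - 1 / 2 ^ (k + 1)) = a - d := by
      rw [ha, hd]; ring_nf
    rw [hb]
    rcases le_or_gt (a - d) 0 with h | h
    · rw [max_eq_left h]
      positivity
    · have hda : d ≤ a := by linarith
      have hapos : 0 < a := lt_of_lt_of_le hdpos hda
      rw [max_eq_right (le_of_lt h), max_eq_right (le_of_lt hapos)]
      have hcd : c = 1 / d := by rw [hc, hd]; field_simp
      have : a * d ≤ a ^ 2 := by nlinarith
      rw [hcd]
      rw [div_mul_eq_mul_div, le_div_iff₀ hdpos]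
      nlinarith
  have hnn : ∀ x, 0 ≤ max 0 (f x - K * (1 - 1 / 2 ^ (k + 1))) := fun x => le_max_left _ _
  have hmeas : AEStronglyMeasurable (fun x => max 0 (f x - K * (1 - 1 / 2 ^ (k + 1)))) μ := by
    apply Measurable.aestronglyMeasurable
    exact measurable_const.max (hf.sub measurable_const)
  have hint' : Integrable (fun x => c * (max 0 (f x - K * (1 - 1 / 2 ^ k))) ^ 2) μ :=
    hint.const_mul c
  have h1 : Integrable (fun x => max 0 (f x - K * (1 - 1 / 2 ^ (k + 1)))) μ := by
    apply hint'.mono' hmeas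
    filter_upwards with x
    rw [Real.norm_eq_abs, abs_of_nonneg (hnn x)]
    exact key x
  refine ⟨h1, ?_⟩
  calc ∫ x, max 0 (f x - K * (1 - 1 / 2 ^ (k + 1))) ∂μ
      ≤ ∫ x, c * (max 0 (f x - K * (1 - 1 / 2 ^ k))) ^ 2 ∂μ :=
        integral_mono h1 hint' key
    _ = c * ∫ x, (max 0 (f x - K * (1 - 1 / 2 ^ k))) ^ 2 ∂μ := integral_const_mul c _
end

section
/- Let n ≥ 1 be a natural number and α ∈ (−1, 1). There is a constant C = C(n, α) > 0 such that for every Schwartz function f : ℝⁿ → ℂ, (∫_{ℝⁿ} |f(x)|² dx)^{1/2} ≤ C·(∫_{ℝⁿ} |f(x)| dx)^{(1+α)/(n+1+α)}·(∫_{ℝⁿ} ‖ξ‖^{1+α}·|𝓕f(ξ)|² dξ)^{n/(2(n+1+α))}, where 𝓕f denotes the Fourier transform of f. -/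
open MeasureTheory Real
open scoped FourierTransform RealInnerProductSpace


variable {V : Type*} [NormedAddCommGroup V] [InnerProductSpace ℝ V]
    [FiniteDimensional ℝ V] [MeasurableSpace V] [BorelSpace V]

lemma conj_fourierChar (t : ℝ) : (starRingEnd ℂ) (𝐞 t : ℂ) = ((𝐞 (-t) : Circle) : ℂ) := by
  simp only [Real.fourierChar_apply, ← Complex.exp_conj, map_mul, Complex.conj_ofReal, map_ofNat,
    Complex.conj_I]
  push_cast; ring_nf

lemma schwartz_plancherel (f : SchwartzMap V ℂ) :
    ∫ ξ, ‖𝓕 (⇑f) ξ‖ ^ 2 = ∫ x, ‖f x‖ ^ 2 := by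
  set g := SchwartzMap.fourierTransformCLM ℂ f with hgdef
  have hgc : ⇑g = 𝓕 ⇑f := rfl
  have hf_int : Integrable (⇑f) := f.integrable
  have hg_int : Integrable (⇑g) := g.integrable
  have hh_int : Integrable (fun ξ => (starRingEnd ℂ) (g ξ)) := by
    apply hg_int.norm.mono' (Complex.continuous_conj.comp_aestronglyMeasurable hg_int.1)
    filter_upwards with x; simp
  have mult := VectorFourier.integral_fourierIntegral_smul_eq_flip (L := innerₗ V)
      Real.continuous_fourierChar continuous_inner hf_int hh_int
  rw [flip_innerₗ] at mult
  have key : ∀ x, VectorFourier.fourierIntegral 𝐞 volume (innerₗ V)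
      (fun ξ => (starRingEnd ℂ) (g ξ)) x = (starRingEnd ℂ) (f x) := by
    intro x
    have inv : 𝓕⁻ (⇑g) x = f x := by
      rw [hgc, Continuous.fourierInv_fourier_eq f.continuous hf_int (hgc ▸ hg_int)]
    have step : VectorFourier.fourierIntegral 𝐞 volume (innerₗ V)
        (fun ξ => (starRingEnd ℂ) (g ξ)) x = (starRingEnd ℂ) (𝓕⁻ (⇑g) x) := by
      rw [Real.fourierInv_eq, ← integral_conj]
      show (∫ ξ, (𝐞 (-⟪ξ, x⟫) : Circle) • ((starRingEnd ℂ) (g ξ))) = _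
      congr 1
      funext ξ
      simp only [Circle.smul_def, smul_eq_mul, map_mul, conj_fourierChar]
    exact step.trans (congrArg (starRingEnd ℂ) inv)
  have mult2 : ∫ ξ, ((‖g ξ‖ ^ 2 : ℝ) : ℂ) = ∫ x, ((‖f x‖ ^ 2 : ℝ) : ℂ) := by
    have l1 : ∀ ξ : V, (VectorFourier.fourierIntegral 𝐞 volume (innerₗ V) (⇑f) ξ) •
        ((starRingEnd ℂ) (g ξ)) = ((‖g ξ‖ ^ 2 : ℝ) : ℂ) := by
      intro ξ
      have h1 : VectorFourier.fourierIntegral 𝐞 volume (innerₗ V) (⇑f) ξ = g ξ := rfl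
      rw [h1, smul_eq_mul, Complex.mul_conj']
      push_cast; ring
    have l2 : ∀ x : V, (f x) • (VectorFourier.fourierIntegral 𝐞 volume (innerₗ V)
        (fun ξ => (starRingEnd ℂ) (g ξ)) x) = ((‖f x‖ ^ 2 : ℝ) : ℂ) := by
      intro x
      rw [key x, smul_eq_mul, Complex.mul_conj']
      push_cast; ring
    calc ∫ ξ, ((‖g ξ‖ ^ 2 : ℝ) : ℂ)
        = ∫ ξ, (VectorFourier.fourierIntegral 𝐞 volume (innerₗ V) (⇑f) ξ) •
            ((starRingEnd ℂ) (g ξ)) := by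
          congr 1; funext ξ; rw [l1]
      _ = ∫ x, (f x) • (VectorFourier.fourierIntegral 𝐞 volume (innerₗ V)
          (fun ξ => (starRingEnd ℂ) (g ξ)) x) := mult
      _ = ∫ x, ((‖f x‖ ^ 2 : ℝ) : ℂ) := by congr 1; funext x; rw [l2]
  have e1 : ∫ ξ, ((‖g ξ‖ ^ 2 : ℝ) : ℂ) = (((∫ ξ, ‖g ξ‖ ^ 2) : ℝ) : ℂ) := integral_ofReal
  have e2 : ∫ x, ((‖f x‖ ^ 2 : ℝ) : ℂ) = (((∫ x, ‖f x‖ ^ 2) : ℝ) : ℂ) := integral_ofReal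
  rw [e1, e2] at mult2
  exact Complex.ofReal_injective mult2


section Aux
variable {V : Type*} [NormedAddCommGroup V] [InnerProductSpace ℝ V]
    [FiniteDimensional ℝ V] [MeasurableSpace V] [BorelSpace V]

lemma aux_int_sq (g : SchwartzMap V ℂ) : Integrable (fun x => ‖g x‖ ^ 2) := by
  set C := (SchwartzMap.seminorm ℝ 0 0) g with hC
  apply ((g.integrable (μ := volume)).norm.const_mul C).mono'
    ((g.continuous.norm.pow 2).aestronglyMeasurable)
  filter_upwards with x
  show ‖‖g x‖ ^ 2‖ ≤ C * ‖g x‖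
  rw [Real.norm_eq_abs, abs_of_nonneg (by positivity), pow_two]
  exact mul_le_mul_of_nonneg_right (g.norm_le_seminorm ℝ x) (norm_nonneg _)

lemma aux_rpow_le {β : ℝ} (hβ0 : 0 < β) (hβ2 : β ≤ 2) (t : ℝ) (ht : 0 ≤ t) :
    t ^ β ≤ 1 + t ^ 2 := by
  rcases le_total t 1 with h | h
  · have : t ^ β ≤ 1 := Real.rpow_le_one ht h hβ0.le
    nlinarith [sq_nonneg t]
  · have h1 : t ^ β ≤ t ^ (2:ℝ) := Real.rpow_le_rpow_of_exponent_le h hβ2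
    rw [show (2:ℝ) = ((2:ℕ):ℝ) by norm_num, Real.rpow_natCast] at h1
    linarith

lemma aux_int_rpow {β : ℝ} (hβ0 : 0 < β) (hβ2 : β ≤ 2) (g : SchwartzMap V ℂ) :
    Integrable (fun x => ‖x‖ ^ β * ‖g x‖ ^ 2) := by
  set C := (SchwartzMap.seminorm ℝ 0 0) g with hC
  have hCnn : 0 ≤ C := apply_nonneg _ _
  have hint : Integrable (fun x : V => C * (‖g x‖ + ‖x‖ ^ 2 * ‖g x‖)) :=
    ((g.integrable (μ := volume)).norm.add (g.integrable_pow_mul volume 2)).const_mul C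
  have hmeas : AEStronglyMeasurable (fun x : V => ‖x‖ ^ β * ‖g x‖ ^ 2) volume :=
    Continuous.aestronglyMeasurable (by
      exact ((Real.continuous_rpow_const hβ0.le).comp continuous_norm).mul
        (g.continuous.norm.pow 2))
  apply hint.mono' hmeas
  filter_upwards with x
  have h0 : 0 ≤ ‖x‖ ^ β := Real.rpow_nonneg (norm_nonneg _) _
  rw [Real.norm_eq_abs, abs_of_nonneg (by positivity)]
  have h1 : ‖x‖ ^ β * ‖g x‖ ^ 2 ≤ (1 + ‖x‖ ^ 2) * ‖g x‖ ^ 2 :=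
    mul_le_mul_of_nonneg_right (aux_rpow_le hβ0 hβ2 _ (norm_nonneg _)) (by positivity)
  have h2 : (1 + ‖x‖ ^ 2) * ‖g x‖ ^ 2 ≤ C * (‖g x‖ + ‖x‖ ^ 2 * ‖g x‖) := by
    have hb : ‖g x‖ ≤ C := g.norm_le_seminorm ℝ x
    nlinarith [mul_le_mul_of_nonneg_right hb (norm_nonneg (g x)),
      mul_le_mul_of_nonneg_left (mul_le_mul_of_nonneg_right hb (norm_nonneg (g x)))
        (sq_nonneg ‖x‖), sq_nonneg ‖x‖, norm_nonneg (g x)]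
  linarith

end Aux

set_option maxHeartbeats 2000000 in
/-- Let `n ≥ 1` and `α ∈ (-1,1)`. There is `C = C(n,α) > 0` such that for every Schwartz
function `f : ℝⁿ → ℂ`,
`(∫ |f|²)^{1/2} ≤ C·(∫ |f|)^{(1+α)/(n+1+α)}·(∫ ‖ξ‖^{1+α}|𝓕f(ξ)|² dξ)^{n/(2(n+1+α))}`. -/
theorem schwartz_interpolation_L1_Hs (n : ℕ) (hn : 1 ≤ n) (α : ℝ)
    (hα : α ∈ Set.Ioo (-1 : ℝ) 1) :
    ∃ C : ℝ, 0 < C ∧ ∀ f : SchwartzMap (EuclideanSpace ℝ (Fin n)) ℂ,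
      (∫ x, ‖f x‖ ^ 2) ^ ((1 : ℝ) / 2) ≤
        C * (∫ x, ‖f x‖) ^ ((1 + α) / (n + 1 + α)) *
          (∫ ξ, ‖ξ‖ ^ (1 + α) * ‖𝓕 (⇑f) ξ‖ ^ 2) ^ ((n : ℝ) / (2 * (n + 1 + α))) := by
  obtain ⟨hα1, hα2⟩ := hα
  haveI : NeZero n := ⟨by omega⟩
  have hβ0 : (0:ℝ) < 1 + α := by linarith
  have hβ2 : (1:ℝ) + α ≤ 2 := by linarith
  have hn1 : (1:ℝ) ≤ (n:ℝ) := by exact_mod_cast hn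
  have hp0 : (0:ℝ) < (n:ℝ) + 1 + α := by linarith
  set c : ℝ := (volume (Metric.ball (0 : EuclideanSpace ℝ (Fin n)) 1)).toReal with hc
  have hc0 : 0 < c :=
    ENNReal.toReal_pos (Metric.measure_ball_pos _ _ one_pos).ne' measure_ball_lt_top.ne
  refine ⟨(c + 1) ^ ((1:ℝ)/2), Real.rpow_pos_of_pos (by linarith) _, ?_⟩
  intro f
  set g := SchwartzMap.fourierTransformCLM ℂ f with hgdef
  have hgc : ⇑g = 𝓕 ⇑f := rfl
  set β : ℝ := 1 + α with hβ
  set p : ℝ := (n:ℝ) + 1 + α with hp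
  set M : ℝ := ∫ x, ‖f x‖ with hM
  set J : ℝ := ∫ ξ, ‖ξ‖ ^ β * ‖𝓕 (⇑f) ξ‖ ^ 2 with hJ
  set L : ℝ := ∫ x, ‖f x‖ ^ 2 with hL
  have hL0 : 0 ≤ L := integral_nonneg fun x => by positivity
  have hM0 : 0 ≤ M := integral_nonneg fun x => norm_nonneg _
  have hJ0 : 0 ≤ J := integral_nonneg fun ξ => by positivity
  have hG_int : Integrable (fun ξ : EuclideanSpace ℝ (Fin n) => ‖𝓕 (⇑f) ξ‖ ^ 2) := by
    have := aux_int_sq g; rwa [hgc] at this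
  have hH_int : Integrable
      (fun ξ : EuclideanSpace ℝ (Fin n) => ‖ξ‖ ^ β * ‖𝓕 (⇑f) ξ‖ ^ 2) := by
    have := aux_int_rpow hβ0 hβ2 g; rwa [hgc] at this
  have hFbound : ∀ ξ, ‖𝓕 (⇑f) ξ‖ ≤ M := fun ξ =>
    VectorFourier.norm_fourierIntegral_le_integral_norm _ _ _ _ _
  have key : ∀ R : ℝ, 0 < R → L ≤ c * (R ^ n * M ^ 2) + R ^ (-β) * J := by
    intro R hR
    have hplan : L = ∫ ξ, ‖𝓕 (⇑f) ξ‖ ^ 2 := (schwartz_plancherel f).symm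
    set s := Metric.ball (0 : EuclideanSpace ℝ (Fin n)) R with hs
    have hsm : MeasurableSet s := measurableSet_ball
    have hsplit : (∫ ξ in s, ‖𝓕 (⇑f) ξ‖ ^ 2) + (∫ ξ in sᶜ, ‖𝓕 (⇑f) ξ‖ ^ 2)
        = ∫ ξ, ‖𝓕 (⇑f) ξ‖ ^ 2 := integral_add_compl hsm hG_int
    have hvol : (volume s).toReal = R ^ n * c := by
      rw [hs, Measure.addHaar_ball volume _ hR.le, ENNReal.toReal_mul,
        ENNReal.toReal_ofReal (by positivity), finrank_euclideanSpace_fin]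
    have hb1 : (∫ ξ in s, ‖𝓕 (⇑f) ξ‖ ^ 2) ≤ c * (R ^ n * M ^ 2) := by
      have h1 : (∫ ξ in s, ‖𝓕 (⇑f) ξ‖ ^ 2) ≤ ∫ _ξ in s, M ^ 2 :=
        setIntegral_mono_on hG_int.integrableOn
          (integrableOn_const measure_ball_lt_top.ne) hsm
          (fun ξ _ => by have := hFbound ξ; nlinarith [norm_nonneg (𝓕 (⇑f) ξ)])
      rw [setIntegral_const, smul_eq_mul, show volume.real s = (volume s).toReal from rfl, hvol] at h1
      nlinarith [h1]
    have hb2 : (∫ ξ in sᶜ, ‖𝓕 (⇑f) ξ‖ ^ 2) ≤ R ^ (-β) * J := by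
      have hmono : (∫ ξ in sᶜ, ‖𝓕 (⇑f) ξ‖ ^ 2)
          ≤ ∫ ξ in sᶜ, R ^ (-β) * (‖ξ‖ ^ β * ‖𝓕 (⇑f) ξ‖ ^ 2) := by
        apply setIntegral_mono_on hG_int.integrableOn
          ((hH_int.const_mul _).integrableOn) hsm.compl
        intro ξ hξ
        have hξR : R ≤ ‖ξ‖ := by
          simp only [hs, Set.mem_compl_iff, Metric.mem_ball, dist_zero_right, not_lt] at hξ
          exact hξ
        have h1 : R ^ β ≤ ‖ξ‖ ^ β := Real.rpow_le_rpow hR.le hξR hβ0.le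
        have h2 : R ^ (-β) * R ^ β = 1 := by
          rw [← Real.rpow_add hR]; simp
        have h3 : 0 ≤ R ^ (-β) := Real.rpow_nonneg hR.le _
        have h4 : 0 ≤ ‖𝓕 (⇑f) ξ‖ ^ 2 := sq_nonneg _
        calc ‖𝓕 (⇑f) ξ‖ ^ 2 = (R ^ (-β) * R ^ β) * ‖𝓕 (⇑f) ξ‖ ^ 2 := by rw [h2]; ring
          _ ≤ R ^ (-β) * (‖ξ‖ ^ β * ‖𝓕 (⇑f) ξ‖ ^ 2) := by
              nlinarith [mul_le_mul_of_nonneg_right h1 h4]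
      have h5 : (∫ ξ in sᶜ, R ^ (-β) * (‖ξ‖ ^ β * ‖𝓕 (⇑f) ξ‖ ^ 2))
          = R ^ (-β) * ∫ ξ in sᶜ, ‖ξ‖ ^ β * ‖𝓕 (⇑f) ξ‖ ^ 2 := integral_const_mul _ _
      have h6 : (∫ ξ in sᶜ, ‖ξ‖ ^ β * ‖𝓕 (⇑f) ξ‖ ^ 2) ≤ J :=
        setIntegral_le_integral hH_int (Filter.Eventually.of_forall fun ξ => by positivity)
      exact hmono.trans (by
        rw [h5]
        exact mul_le_mul_of_nonneg_left h6 (Real.rpow_nonneg hR.le _))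
    linarith [hsplit, hb1, hb2, hplan]
  by_cases hLz : L = 0
  · rw [hLz, Real.zero_rpow (by norm_num : (1:ℝ)/2 ≠ 0)]
    have h1 : 0 ≤ M ^ (β/p) := Real.rpow_nonneg hM0 _
    have h2 : 0 ≤ J ^ ((n:ℝ)/(2*p)) := Real.rpow_nonneg hJ0 _
    have h3 : 0 ≤ (c+1) ^ ((1:ℝ)/2) := Real.rpow_nonneg (by linarith) _
    positivity
  · have hLpos : 0 < L := lt_of_le_of_ne hL0 (Ne.symm hLz)
    have hMpos : 0 < M := by
      rcases eq_or_lt_of_le hM0 with h | h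
      · exfalso
        have h0 : (fun x => ‖f x‖) =ᵐ[volume] 0 :=
          (integral_eq_zero_iff_of_nonneg (fun x => norm_nonneg _) f.integrable.norm).1 h.symm
        have h20 : (fun x : EuclideanSpace ℝ (Fin n) => ‖f x‖ ^ 2) =ᵐ[volume]
            (fun _ => (0:ℝ)) := by
          filter_upwards [h0] with x hx
          simp only [Pi.zero_apply] at hx
          simp [hx]
        have : L = 0 := by rw [hL, integral_congr_ae h20, integral_zero]
        exact hLz this
      · exact h
    have hM2 : 0 < M ^ 2 := by positivity
    have hJpos : 0 < J := by
      rcases eq_or_lt_of_le hJ0 with h | h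
      · exfalso
        have hcM : 0 < c * M ^ 2 := by positivity
        set R0 : ℝ := min 1 (L / (2 * (c * M ^ 2))) with hR0d
        have hR0pos : 0 < R0 := lt_min one_pos (by positivity)
        have hkey := key R0 hR0pos
        rw [← h, mul_zero, add_zero] at hkey
        have hRn : R0 ^ n ≤ R0 := by
          have h1 := pow_le_pow_of_le_one hR0pos.le (min_le_left _ _) hn
          simpa using h1
        have hR0le : R0 ≤ L / (2 * (c * M ^ 2)) := min_le_right _ _
        have hstep : c * (R0 ^ n * M ^ 2) ≤ L / 2 := by
          have e : c * ((L / (2 * (c * M ^ 2))) * M ^ 2) = L / 2 := by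
            field_simp
          nlinarith [hRn, hR0le, hR0pos, hM2, hc0]
        linarith
      · exact h
    set r : ℝ := J / M ^ 2 with hr
    have hrpos : 0 < r := div_pos hJpos hM2
    set R : ℝ := r ^ ((1:ℝ)/p) with hR
    have hRpos : 0 < R := Real.rpow_pos_of_pos hrpos _
    have hRp : R ^ p = r := by
      rw [hR, ← Real.rpow_mul hrpos.le, one_div_mul_cancel hp0.ne', Real.rpow_one]
    have hpn : p = (n:ℝ) + β := by rw [hp, hβ]; ring
    have hJr : J = R ^ p * M ^ 2 := by
      rw [hRp, hr]; field_simp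
    have e2 : R ^ (-β) * J = R ^ n * M ^ 2 := by
      rw [hJr, ← mul_assoc, ← Real.rpow_add hRpos, ← Real.rpow_natCast R n]
      congr 2
      rw [hpn]; ring
    have hM2rpow : ∀ y : ℝ, ((M ^ 2 : ℝ)) ^ y = M ^ (2 * y) := by
      intro y
      rw [← Real.rpow_natCast M 2, ← Real.rpow_mul hM0]
      norm_num
    have e1 : R ^ n * M ^ 2 = M ^ (2 * (β / p)) * J ^ ((n:ℝ) / p) := by
      have hRn : (R : ℝ) ^ n = r ^ ((n:ℝ)/p) := by
        rw [hR, ← Real.rpow_natCast (r ^ ((1:ℝ)/p)) n, ← Real.rpow_mul hrpos.le]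
        congr 1; ring
      rw [hRn, hr, Real.div_rpow hJ0 hM2.le, hM2rpow]
      rw [div_mul_eq_mul_div, mul_div_assoc,
        show ((M:ℝ) ^ 2) = M ^ ((2:ℕ):ℝ) by rw [Real.rpow_natCast],
        ← Real.rpow_sub hMpos, mul_comm]
      congr 1
      push_cast
      field_simp
      rw [hpn]; ring
    have hfinal : L ≤ (c + 1) * (M ^ (2 * (β / p)) * J ^ ((n:ℝ) / p)) := by
      have hk := key R hRpos
      rw [e2, e1] at hk
      nlinarith [Real.rpow_nonneg hM0 (2*(β/p)), Real.rpow_nonneg hJ0 ((n:ℝ)/p), hc0]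
    have h7 : L ^ ((1:ℝ)/2) ≤
        ((c + 1) * (M ^ (2 * (β / p)) * J ^ ((n:ℝ) / p))) ^ ((1:ℝ)/2) :=
      Real.rpow_le_rpow hL0 hfinal (by norm_num)
    have h8 : ((c + 1) * (M ^ (2 * (β / p)) * J ^ ((n:ℝ) / p))) ^ ((1:ℝ)/2)
        = (c + 1) ^ ((1:ℝ)/2) * M ^ (β / p) * J ^ ((n:ℝ) / (2 * p)) := by
      rw [Real.mul_rpow (by linarith)
          (mul_nonneg (Real.rpow_nonneg hM0 _) (Real.rpow_nonneg hJ0 _)),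
        Real.mul_rpow (Real.rpow_nonneg hM0 _) (Real.rpow_nonneg hJ0 _),
        ← Real.rpow_mul hM0, ← Real.rpow_mul hJ0,
        show 2 * (β / p) * ((1:ℝ)/2) = β / p by ring,
        show ((n:ℝ) / p) * ((1:ℝ)/2) = (n:ℝ) / (2 * p) by
          rw [div_mul_div_comm, mul_one, mul_comm p 2], ← mul_assoc]
    exact h7.trans_eq h8
end

section
/- Let E be a finite-dimensional real normed vector space, let u : ℝ × E → E be continuous and globally Lipschitz in the space variable uniformly in time (i.e. there is L ≥ 0 with ‖u(t,x) − u(t,y)‖ ≤ L‖x − y‖ for all t, x, y), and let θ : ℝ × E → ℝ be continuously differentiable and satisfy the transport equation ∂_t θ(t,x) + D_x θ(t,x)(u(t,x)) = 0 for all (t,x) ∈ ℝ × E. Then for every t ∈ ℝ the range of x ↦ θ(t,x) equals the range of x ↦ θ(0,x); in particular the supremum and the infimum of θ(t,·) are independent of t. -/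
/-- Let `E` be a finite-dimensional real normed vector space, `u : ℝ × E → E` continuous
and globally Lipschitz in space uniformly in time, and `θ : ℝ × E → ℝ` a `C¹` solution of
the transport equation `∂_t θ(t,x) + D_x θ(t,x)(u(t,x)) = 0`. Then for every `t` the range
of `θ(t,·)` equals the range of `θ(0,·)`; in particular `sup` and `inf` of `θ(t,·)` are
independent of `t`. -/
theorem transport_equation_range_invariant
    {E : Type*} [NormedAddCommGroup E] [NormedSpace ℝ E] [FiniteDimensional ℝ E]
    (u : ℝ × E → E) (hu : Continuous u)
    (L : ℝ) (hL : 0 ≤ L)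
    (hLip : ∀ t x y, ‖u (t, x) - u (t, y)‖ ≤ L * ‖x - y‖)
    (θ : ℝ × E → ℝ) (hθ : ContDiff ℝ 1 θ)
    (hpde : ∀ t x, deriv (fun s => θ (s, x)) t +
      fderiv ℝ (fun y => θ (t, y)) x (u (t, x)) = 0) :
    ∀ t : ℝ, Set.range (fun x => θ (t, x)) = Set.range (fun x => θ (0, x)) := by
  set δ : ℝ := (2 * (L + 1))⁻¹ with hδdef
  have hδ : 0 < δ := by positivity
  -- splitting of the total derivative of θ into partial derivatives
  have fderiv_split : ∀ (a : ℝ) (x : E) (v : E),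
      fderiv ℝ θ (a, x) (1, v) =
        deriv (fun s => θ (s, x)) a + fderiv ℝ (fun y => θ (a, y)) x v := by
    intro a x v
    have hD : HasFDerivAt θ (fderiv ℝ θ (a, x)) (a, x) :=
      ((hθ.differentiable one_ne_zero) (a, x)).hasFDerivAt
    have h1 : HasDerivAt (fun s => θ (s, x)) (fderiv ℝ θ (a, x) (1, 0)) a := by
      have hc : HasDerivAt (fun s : ℝ => (s, x)) ((1 : ℝ), (0 : E)) a :=
        (hasDerivAt_id a).prodMk (hasDerivAt_const a x)
      exact hD.comp_hasDerivAt a hc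
    have h2 : HasFDerivAt (fun y => θ (a, y))
        ((fderiv ℝ θ (a, x)).comp (ContinuousLinearMap.inr ℝ ℝ E)) x := by
      have hc : HasFDerivAt (fun y : E => ((a : ℝ), y)) (ContinuousLinearMap.inr ℝ ℝ E) x :=
        (hasFDerivAt_const a x).prodMk (hasFDerivAt_id x)
      exact hD.comp x hc
    rw [h1.deriv, h2.fderiv, ContinuousLinearMap.comp_apply, ContinuousLinearMap.inr_apply,
      ← ContinuousLinearMap.map_add, Prod.mk_add_mk, add_zero, zero_add]
  -- constancy of θ along solutions of the ODE
  have const_along : ∀ (p q : ℝ) (f : ℝ → E),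
      (∀ t ∈ Set.Icc p q, HasDerivWithinAt f (u (t, f t)) (Set.Icc p q) t) →
      ∀ s ∈ Set.Icc p q, θ (s, f s) = θ (p, f p) := by
    intro p q f hf
    have hfc : ContinuousOn f (Set.Icc p q) := fun t ht =>
      (hf t ht).differentiableWithinAt.continuousWithinAt
    have hcont : ContinuousOn (fun t => θ (t, f t)) (Set.Icc p q) :=
      hθ.continuous.comp_continuousOn (continuousOn_id.prodMk hfc)
    have hderiv : ∀ t ∈ Set.Ico p q,
        HasDerivWithinAt (fun t => θ (t, f t)) 0 (Set.Ici t) t := by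
      intro t ht
      have ht' : t ∈ Set.Icc p q := Set.mem_Icc_of_Ico ht
      have h1 : HasDerivWithinAt (fun s : ℝ => (s, f s)) ((1 : ℝ), u (t, f t))
          (Set.Icc p q) t :=
        (hasDerivWithinAt_id t _).prodMk (hf t ht')
      have hD : HasFDerivAt θ (fderiv ℝ θ (t, f t)) (t, f t) :=
        ((hθ.differentiable one_ne_zero) (t, f t)).hasFDerivAt
      have h2 : HasDerivWithinAt (fun s => θ (s, f s))
          (fderiv ℝ θ (t, f t) (1, u (t, f t))) (Set.Icc p q) t :=
        hD.comp_hasDerivWithinAt t h1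
      have h3 : fderiv ℝ θ (t, f t) (1, u (t, f t)) = 0 := by
        rw [fderiv_split]; exact hpde t (f t)
      rw [h3] at h2
      exact (h2.mono (Set.Icc_subset_Icc_left ht.1)).mono_of_mem_nhdsWithin
        (Icc_mem_nhdsGE_of_mem ⟨le_rfl, ht.2⟩)
    exact fun s hs => constant_of_has_deriv_right_zero hcont hderiv s hs
  -- local existence of solutions, with a uniform time step δ
  have exist_local : ∀ (t₀ : ℝ) (x₀ : E), ∃ f : ℝ → E, f t₀ = x₀ ∧
      ∀ t ∈ Set.Icc (t₀ - δ) (t₀ + δ),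
        HasDerivWithinAt f (u (t, f t)) (Set.Icc (t₀ - δ) (t₀ + δ)) t := by
    intro t₀ x₀
    obtain ⟨M, hM⟩ := isCompact_Icc.exists_bound_of_continuousOn
      (s := Set.Icc (t₀ - δ) (t₀ + δ)) (f := fun t : ℝ => u (t, (0 : E)))
      ((hu.comp (continuous_id.prodMk continuous_const)).continuousOn)
    set A : ℝ := max M 0 + L * ‖x₀‖ + 1 with hAdef
    have hA : 0 < A := by positivity
    have hpl : IsPicardLindelof (fun t x => u (t, x)) (tmin := t₀ - δ) (tmax := t₀ + δ)
        ⟨t₀, by constructor <;> linarith⟩ x₀ ⟨A, hA.le⟩ 0 ⟨(1 + L) * A, by positivity⟩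
        ⟨L, hL⟩ := by
      constructor
      · intro t _
        refine (LipschitzWith.of_dist_le_mul fun x y => ?_).lipschitzOnWith
        rw [dist_eq_norm, dist_eq_norm]; exact hLip t x y
      · intro x _
        exact (hu.comp (continuous_id.prodMk continuous_const)).continuousOn
      · intro t ht x hx
        show ‖u (t, x)‖ ≤ (1 + L) * A
        have hx' : ‖x - x₀‖ ≤ A := by
          rw [Metric.mem_closedBall, dist_eq_norm] at hx; exact hx
        have hxx : ‖x‖ ≤ A + ‖x₀‖ := by
          calc ‖x‖ = ‖(x - x₀) + x₀‖ := by congr 1; abel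
            _ ≤ ‖x - x₀‖ + ‖x₀‖ := norm_add_le _ _
            _ ≤ A + ‖x₀‖ := by linarith
        have h1 : ‖u (t, x)‖ ≤ ‖u (t, x) - u (t, (0 : E))‖ + ‖u (t, 0)‖ := by
          calc ‖u (t, x)‖ = ‖(u (t, x) - u (t, 0)) + u (t, 0)‖ := by congr 1; abel
            _ ≤ _ := norm_add_le _ _
        have h2 : ‖u (t, x) - u (t, (0 : E))‖ ≤ L * ‖x‖ := by
          simpa using hLip t x 0
        have h3 : ‖u (t, 0)‖ ≤ M := hM t ht
        have hM0 : M ≤ max M 0 := le_max_left _ _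
        have h4 : L * ‖x‖ ≤ L * (A + ‖x₀‖) := by
          exact mul_le_mul_of_nonneg_left hxx hL
        have : (1 + L) * A = A + L * A := by ring
        nlinarith [norm_nonneg x₀]
      · have : max (t₀ + δ - t₀) (t₀ - (t₀ - δ)) = δ := by
          rw [show t₀ + δ - t₀ = δ by ring, show t₀ - (t₀ - δ) = δ by ring, max_self]
        simp only [NNReal.coe_mk, NNReal.coe_zero, tsub_zero, sub_zero]
        rw [this]
        have hkey : (1 + L) * δ = 1 / 2 := by
          rw [hδdef]; field_simp; ring
        calc (1 + L) * A * δ = ((1 + L) * δ) * A := by ring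
          _ = (1 / 2) * A := by rw [hkey]
          _ ≤ A := by linarith
    obtain ⟨f, hf0, hf⟩ := hpl.exists_eq_forall_mem_Icc_hasDerivWithinAt₀
    exact ⟨f, hf0, hf⟩
  -- one step of length at most δ
  have step : ∀ (a : ℝ) (x : E) (b : ℝ), |b - a| ≤ δ → ∃ y, θ (b, y) = θ (a, x) := by
    intro a x b hab
    obtain ⟨f, hf0, hf⟩ := exist_local a x
    have hmem : ∀ s : ℝ, |s - a| ≤ δ → s ∈ Set.Icc (a - δ) (a + δ) := by
      intro s hs
      rw [abs_le] at hs
      constructor <;> linarith [hs.1, hs.2]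
    have ha : a ∈ Set.Icc (a - δ) (a + δ) := hmem a (by simp [hδ.le])
    have hb : b ∈ Set.Icc (a - δ) (a + δ) := hmem b hab
    refine ⟨f b, ?_⟩
    rw [const_along (a - δ) (a + δ) f hf b hb,
      ← const_along (a - δ) (a + δ) f hf a ha, hf0]
  -- iterate: any two times can be connected
  have key : ∀ (n : ℕ) (a : ℝ) (x : E) (b : ℝ), |b - a| ≤ n * δ →
      ∃ y, θ (b, y) = θ (a, x) := by
    intro n
    induction n with
    | zero =>
      intro a x b h
      simp only [Nat.cast_zero, zero_mul] at h
      have hba : b = a := by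
        have := abs_nonneg (b - a)
        have : |b - a| = 0 := le_antisymm h this
        have := abs_eq_zero.mp this
        linarith [sub_eq_zero.mp this]
      exact ⟨x, by rw [hba]⟩
    | succ n ih =>
      intro a x b h
      by_cases hd : |b - a| ≤ δ
      · exact step a x b hd
      · push_neg at hd
        have h' : |b - a| ≤ (n + 1) * δ := by push_cast at h; linarith
        rcases le_total a b with hab | hab
        · have h1 : δ < b - a := by rwa [abs_of_nonneg (by linarith)] at hd
          have h2 : b - a ≤ (n + 1) * δ := by
            rwa [abs_of_nonneg (by linarith)] at h'
          obtain ⟨z, hz⟩ := step a x (a + δ) (by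
            rw [show a + δ - a = δ by ring, abs_of_nonneg hδ.le])
          obtain ⟨y, hy⟩ := ih (a + δ) z b (by
            rw [abs_of_nonneg (by linarith)]; linarith)
          exact ⟨y, by rw [hy, hz]⟩
        · have h1 : δ < a - b := by
            rw [abs_sub_comm] at hd
            rwa [abs_of_nonneg (by linarith)] at hd
          have h2 : a - b ≤ (n + 1) * δ := by
            rw [abs_sub_comm] at h'
            rwa [abs_of_nonneg (by linarith)] at h'
          obtain ⟨z, hz⟩ := step a x (a - δ) (by
            rw [show a - δ - a = -δ by ring, abs_neg, abs_of_nonneg hδ.le])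
          obtain ⟨y, hy⟩ := ih (a - δ) z b (by
            rw [abs_sub_comm, abs_of_nonneg (by linarith)]; linarith)
          exact ⟨y, by rw [hy, hz]⟩
  have main : ∀ (a : ℝ) (x : E) (b : ℝ), ∃ y, θ (b, y) = θ (a, x) := by
    intro a x b
    refine key ⌈|b - a| / δ⌉₊ a x b ?_
    have h1 := Nat.le_ceil (|b - a| / δ)
    rw [div_le_iff₀ hδ] at h1
    linarith
  intro t
  ext r
  simp only [Set.mem_range]
  constructor
  · rintro ⟨x, rfl⟩
    obtain ⟨y, hy⟩ := main t x 0
    exact ⟨y, hy⟩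
  · rintro ⟨x, rfl⟩
    obtain ⟨y, hy⟩ := main 0 x t
    exact ⟨y, hy⟩
end
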